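/- Let k be a field and let u, v ∈ k be nonzero. There exists a nonzero quadratic form q(x,y,z) = a x² + b y² + c z² + d xy + e xz + f yz (i.e., with (a,b,c,d,e,f) ≠ 0) vanishing at all six coordinate triples (u²,u,1), (u^{−2},u^{−1},1), (v²,v,1), (v^{−2},v^{−1},1), (1,0,0), (0,1,0) if and only if (u²−1)(v²−1)(u−v)(uv−1) = 0. -/

import Mathlib

set_option maxHeartbeats 1000000

attribute [local simp] Matrix.cons_val_two Matrix.tail_cons Matrix.head_cons


/-- The six coordinate triples `(u²,u,1), (u⁻²,u⁻¹,1), (v²,v,1), (v⁻²,v⁻¹,1), (1,0,0), (0,1,0)`. -/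
def sixTriples {k : Type*} [Field k] (u v : k) : Fin 6 → Fin 3 → k :=
  ![![u ^ 2, u, 1], ![(u ^ 2)⁻¹, u⁻¹, 1], ![v ^ 2, v, 1], ![(v ^ 2)⁻¹, v⁻¹, 1],
    ![1, 0, 0], ![0, 1, 0]]

/-- Let `k` be a field and `u, v ∈ k` nonzero.  There exists a nonzero quadratic form
`q(x,y,z) = a x² + b y² + c z² + d xy + e xz + f yz` vanishing at all six coordinate triples
`(u²,u,1), (u⁻²,u⁻¹,1), (v²,v,1), (v⁻²,v⁻¹,1), (1,0,0), (0,1,0)` if and only if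
`(u²−1)(v²−1)(u−v)(uv−1) = 0`. -/
theorem conic_through_six_iff {k : Type*} [Field k] (u v : k) (hu : u ≠ 0) (hv : v ≠ 0) :
    (∃ a b c d e f : k, (a, b, c, d, e, f) ≠ (0, 0, 0, 0, 0, 0) ∧
        ∀ m : Fin 6,
          a * sixTriples u v m 0 ^ 2 + b * sixTriples u v m 1 ^ 2 +
            c * sixTriples u v m 2 ^ 2 + d * (sixTriples u v m 0 * sixTriples u v m 1) +
            e * (sixTriples u v m 0 * sixTriples u v m 2) +
            f * (sixTriples u v m 1 * sixTriples u v m 2) = 0) ↔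
      (u ^ 2 - 1) * (v ^ 2 - 1) * (u - v) * (u * v - 1) = 0 := by
  constructor
  · rintro ⟨a, b, c, d, e, f, hne, h⟩
    by_contra hP
    have ha : a = 0 := by
      have h4 := h 4
      simp only [show sixTriples u v 4 = ![1, 0, 0] from rfl] at h4
      simpa using h4
    have hb : b = 0 := by
      have h5 := h 5
      simp only [show sixTriples u v 5 = ![0, 1, 0] from rfl] at h5
      simpa using h5
    subst ha; subst hb
    have E1u : c + d * u ^ 3 + e * u ^ 2 + f * u = 0 := by
      have h0 := h 0; simp only [show sixTriples u v 0 = ![u ^ 2, u, 1] from rfl] at h0; norm_num at h0; linear_combination h0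
    have E2u : c * u ^ 3 + d + e * u + f * u ^ 2 = 0 := by
      have h1 := h 1; simp only [show sixTriples u v 1 = ![(u ^ 2)⁻¹, u⁻¹, 1] from rfl] at h1; norm_num at h1; field_simp at h1
      have h2 : u ^ 3 * (c * u ^ 3 + d + e * u + f * u ^ 2) = 0 := by linear_combination u ^ 3 * h1
      exact (mul_eq_zero.mp h2).resolve_left (pow_ne_zero 3 hu)
    have E1v : c + d * v ^ 3 + e * v ^ 2 + f * v = 0 := by
      have h0 := h 2; simp only [show sixTriples u v 2 = ![v ^ 2, v, 1] from rfl] at h0; norm_num at h0; linear_combination h0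
    have E2v : c * v ^ 3 + d + e * v + f * v ^ 2 = 0 := by
      have h1 := h 3; simp only [show sixTriples u v 3 = ![(v ^ 2)⁻¹, v⁻¹, 1] from rfl] at h1; norm_num at h1; field_simp at h1
      have h2 : v ^ 3 * (c * v ^ 3 + d + e * v + f * v ^ 2) = 0 := by linear_combination v ^ 3 * h1
      exact (mul_eq_zero.mp h2).resolve_left (pow_ne_zero 3 hv)
    have hD : (u ^ 2 - 1) * (v ^ 2 - 1) * (u - v) ^ 2 * (u * v - 1) ^ 2 ≠ 0 := by
      intro h0
      apply hP
      rcases mul_eq_zero.mp h0 with h1 | h1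
      · rcases mul_eq_zero.mp h1 with h2 | h2
        · rcases mul_eq_zero.mp h2 with h3 | h3
          · rw [h3]; ring
          · rw [h3]; ring
        · rw [pow_eq_zero_iff (by norm_num) |>.mp h2]; ring
      · rw [pow_eq_zero_iff (by norm_num) |>.mp h1]; ring
    have hc : c = 0 := by
      have hc0 : (u ^ 2 - 1) * (v ^ 2 - 1) * (u - v) ^ 2 * (u * v - 1) ^ 2 * c = 0 := by
        linear_combination
          (-((-1)*v^2 + v^4 + u*v + (-1)*u*v^5 + (-1)*u^2*v^2 + u^2*v^4)) * E1u +
          (-(u*v^2 + (-1)*u*v^4 + (-1)*u^2*v + u^2*v^5 + u^3*v^2 + (-1)*u^3*v^4)) * E2u +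
          (-(u*v + (-1)*u^2 + (-1)*u^2*v^2 + u^4 + u^4*v^2 + (-1)*u^5*v)) * E1v +
          (-((-1)*u*v^2 + u^2*v + u^2*v^3 + (-1)*u^4*v + (-1)*u^4*v^3 + u^5*v^2)) * E2v
      exact (mul_eq_zero.mp hc0).resolve_left hD
    have hd : d = 0 := by
      have hd0 : (u ^ 2 - 1) * (v ^ 2 - 1) * (u - v) ^ 2 * (u * v - 1) ^ 2 * d = 0 := by
        linear_combination
          (-(u*v^2 + (-1)*u*v^4 + (-1)*u^2*v + u^2*v^5 + u^3*v^2 + (-1)*u^3*v^4)) * E1u +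
          (-((-1)*v^2 + v^4 + u*v + (-1)*u*v^5 + (-1)*u^2*v^2 + u^2*v^4)) * E2u +
          (-((-1)*u*v^2 + u^2*v + u^2*v^3 + (-1)*u^4*v + (-1)*u^4*v^3 + u^5*v^2)) * E1v +
          (-(u*v + (-1)*u^2 + (-1)*u^2*v^2 + u^4 + u^4*v^2 + (-1)*u^5*v)) * E2v
      exact (mul_eq_zero.mp hd0).resolve_left hD
    have he : e = 0 := by
      have he0 : (u ^ 2 - 1) * (v ^ 2 - 1) * (u - v) ^ 2 * (u * v - 1) ^ 2 * e = 0 := by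
        linear_combination
          (-((-1)*v^2 + v^4 + u^2 + (-1)*u^2*v^6 + (-1)*u^3*v + u^3*v^5)) * E1u +
          (-(v + (-1)*v^5 + (-1)*u + u*v^6 + u^3*v^2 + (-1)*u^3*v^4)) * E2u +
          (-(v^2 + (-1)*u*v^3 + (-1)*u^2 + u^4 + u^5*v^3 + (-1)*u^6*v^2)) * E1v +
          (-((-1)*v + u + u^2*v^3 + (-1)*u^4*v^3 + (-1)*u^5 + u^6*v)) * E2v
      exact (mul_eq_zero.mp he0).resolve_left hD
    have hf : f = 0 := by
      have hf0 : (u ^ 2 - 1) * (v ^ 2 - 1) * (u - v) ^ 2 * (u * v - 1) ^ 2 * f = 0 := by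
        linear_combination
          (-(v + (-1)*v^5 + (-1)*u + u*v^6 + u^3*v^2 + (-1)*u^3*v^4)) * E1u +
          (-((-1)*v^2 + v^4 + u^2 + (-1)*u^2*v^6 + (-1)*u^3*v + u^3*v^5)) * E2u +
          (-((-1)*v + u + u^2*v^3 + (-1)*u^4*v^3 + (-1)*u^5 + u^6*v)) * E1v +
          (-(v^2 + (-1)*u*v^3 + (-1)*u^2 + u^4 + u^5*v^3 + (-1)*u^6*v^2)) * E2v
      exact (mul_eq_zero.mp hf0).resolve_left hD
    exact hne (by simp [hc, hd, he, hf])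
  · intro hP
    have diag : u = v ∨ u * v = 1 ∨ u ^ 2 = 1 ∨ v ^ 2 = 1 := by
      rcases mul_eq_zero.mp hP with h1 | h1
      · rcases mul_eq_zero.mp h1 with h2 | h2
        · rcases mul_eq_zero.mp h2 with h3 | h3
          · exact Or.inr <| Or.inr <| Or.inl (by linear_combination h3)
          · exact Or.inr <| Or.inr <| Or.inr (by linear_combination h3)
        · exact Or.inl (sub_eq_zero.mp h2)
      · exact Or.inr <| Or.inl (by linear_combination h1)
    -- helper: the "diagonal" quadratic works when u = v or u*v = 1
    rcases diag with hcase | hcase | hcase | hcase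
    · subst hcase
      refine ⟨0, 0, 0, u, -(1 + u ^ 2), u, by simp [hu], ?_⟩
      intro m; fin_cases m <;> norm_num [sixTriples] <;> (try field_simp) <;> ring
    · refine ⟨0, 0, 0, u, -(1 + u ^ 2), u, by simp [hu], ?_⟩
      intro m; fin_cases m
      · norm_num [sixTriples]; ring
      · norm_num [sixTriples]; field_simp; ring
      · norm_num [sixTriples]; linear_combination (v ^ 2 - u * v) * hcase
      · norm_num [sixTriples]; field_simp; linear_combination (v - u) * hcase
      · norm_num [sixTriples]
      · norm_num [sixTriples]
    · by_cases hvu : v = u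
      · subst hvu
        refine ⟨0, 0, 0, v, -(1 + v ^ 2), v, by simp [hv], ?_⟩
        intro m; fin_cases m <;> norm_num [sixTriples] <;> (try field_simp) <;> ring
      · refine ⟨0, 0, -(v * (v - u)), u * v * (v - u), 1 - u * v ^ 3, v ^ 3 - u, ?_, ?_⟩
        · simp only [ne_eq, Prod.mk.injEq, not_and]
          intro _ _ h3
          exact absurd (mul_eq_zero.mp (neg_eq_zero.mp h3))
            (by push_neg; exact ⟨hv, sub_ne_zero.mpr fun h => hvu h⟩)
        · intro m; fin_cases m
          · norm_num [sixTriples]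
            linear_combination (v ^ 2 - u * v - u * v ^ 3 + u ^ 2 * v ^ 2 - u ^ 3 * v) * hcase
          · norm_num [sixTriples]; field_simp
            linear_combination (-(1 + v ^ 2 - v * u)) * hcase
          · norm_num [sixTriples]; linear_combination (-v ^ 4) * hcase
          · norm_num [sixTriples]; field_simp; linear_combination (-1) * hcase
          · norm_num [sixTriples]
          · norm_num [sixTriples]
    · by_cases hvu : u = v
      · subst hvu
        refine ⟨0, 0, 0, u, -(1 + u ^ 2), u, by simp [hu], ?_⟩
        intro m; fin_cases m <;> norm_num [sixTriples] <;> (try field_simp) <;> ring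
      · refine ⟨0, 0, -(u * (u - v)), v * u * (u - v), 1 - v * u ^ 3, u ^ 3 - v, ?_, ?_⟩
        · simp only [ne_eq, Prod.mk.injEq, not_and]
          intro _ _ h3
          exact absurd (mul_eq_zero.mp (neg_eq_zero.mp h3))
            (by push_neg; exact ⟨hu, sub_ne_zero.mpr fun h => hvu h⟩)
        · intro m; fin_cases m
          · norm_num [sixTriples]; linear_combination (-u ^ 4) * hcase
          · norm_num [sixTriples]; field_simp; linear_combination (-1) * hcase
          · norm_num [sixTriples]
            linear_combination (u ^ 2 - u * v - u ^ 3 * v + u ^ 2 * v ^ 2 - u * v ^ 3) * hcase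
          · norm_num [sixTriples]; field_simp
            linear_combination (-(1 + u ^ 2 - u * v)) * hcase
          · norm_num [sixTriples]
          · norm_num [sixTriples]
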